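/- Let M and N be λ-terms. If there is no reduct M' of M (i.e. no M' with M ↠β M') such that cBT(M') ≤ cBT(N), then M ≠β N. -/

import Mathlib

/-- Untyped λ-terms in de Bruijn notation (the variables are `ℕ`). -/
inductive Lam : Type
  | var : ℕ → Lam
  | app : Lam → Lam → Lam
  | abs : Lam → Lam
  deriving DecidableEq

namespace Lam

/-- Shift the free de Bruijn indices `≥ d` up by one. -/
def lift (d : ℕ) : Lam → Lam
  | var n => if n < d then var n else var (n + 1)
  | app s t => app (lift d s) (lift d t)
  | abs t => abs (lift (d + 1) t)

/-- Capture-avoiding substitution `t[k := u]`. -/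
def subst : Lam → ℕ → Lam → Lam
  | var n, k, u => if n < k then var n else if n = k then u else var (n - 1)
  | app s t, k, u => app (subst s k u) (subst t k u)
  | abs t, k, u => abs (subst t (k + 1) (lift 0 u))

/-- One-step β-reduction `→β`: the compatible closure of the β-rule. -/
inductive Beta : Lam → Lam → Prop
  | beta (t u : Lam) : Beta (Lam.app (Lam.abs t) u) (subst t 0 u)
  | appL {s s' : Lam} (t : Lam) : Beta s s' → Beta (Lam.app s t) (Lam.app s' t)
  | appR (s : Lam) {t t' : Lam} : Beta t t' → Beta (Lam.app s t) (Lam.app s t')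
  | abs {t t' : Lam} : Beta t t' → Beta (Lam.abs t) (Lam.abs t')

/-- `↠β`: the reflexive–transitive closure of `→β`. -/
def BetaStar : Lam → Lam → Prop := Relation.ReflTransGen Beta

/-- `→β^k`: the `k`-fold composition of `→β`. -/
def BetaN : ℕ → Lam → Lam → Prop
  | 0, s, t => s = t
  | k + 1, s, t => ∃ u, Beta s u ∧ BetaN k u t

/-- `=β`, β-convertibility: the equivalence closure of `→β`. -/
inductive Conv : Lam → Lam → Prop
  | rel {s t : Lam} : Beta s t → Conv s t
  | refl (s : Lam) : Conv s s
  | symm {s t : Lam} : Conv s t → Conv t s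
  | trans {s t u : Lam} : Conv s t → Conv t u → Conv s u

/-- The free variables of a term (as de Bruijn indices). -/
def FV : Lam → Finset ℕ
  | var n => {n}
  | app s t => FV s ∪ FV t
  | abs t => ((FV t).erase 0).image (· - 1)

/-- `Y` is a fixed point combinator (fpc): `Y x =β x (Y x)` for a variable `x` not free in `Y`. -/
def IsFPC (Y : Lam) : Prop :=
  ∀ x : ℕ, x ∉ FV Y → Conv (app Y (var x)) (app (var x) (app Y (var x)))

/-- `I = λx.x` -/
def combI : Lam := abs (var 0)

/-- `S = λxyz.xz(yz)` -/
def combS : Lam := abs (abs (abs (app (app (var 2) (var 0)) (app (var 1) (var 0)))))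

/-- `B = λxyz.x(yz)` -/
def combB : Lam := abs (abs (abs (app (var 2) (app (var 1) (var 0)))))

/-- `δ = λab.b(ab)` -/
def delta : Lam := abs (abs (app (var 0) (app (var 1) (var 0))))

/-- `η = λxf.f(xxf)` -/
def etaC : Lam := abs (abs (app (var 0) (app (app (var 1) (var 1)) (var 0))))

/-- Curry's fpc `Y₀ = λf.(λx.f(xx))(λx.f(xx))` -/
def curryY : Lam :=
  abs (app (abs (app (var 1) (app (var 0) (var 0))))
    (abs (app (var 1) (app (var 0) (var 0)))))

/-- `A B ⋯ B`: `A` applied to `n` copies of `B`, associating to the left. -/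
def appN (A B : Lam) : ℕ → Lam
  | 0 => A
  | n + 1 => app (appN A B n) B

/-- `M N₁ ⋯ Nₘ`: `M` applied to the terms in `L`, associating to the left. -/
def appList (M : Lam) (L : List Lam) : Lam := L.foldl app M

/-- `M` is an abstraction. -/
def IsAbs : Lam → Prop
  | abs _ => True
  | _ => False

/-- A head reduction step:
    `λx₁…xₙ.(λy.M)N N₁…Nₘ →h λx₁…xₙ.M[y:=N] N₁…Nₘ`. -/
inductive HeadStep : Lam → Lam → Prop
  | beta (t u : Lam) : HeadStep (Lam.app (Lam.abs t) u) (subst t 0 u)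
  | app {s s' : Lam} (t : Lam) : ¬ IsAbs s → HeadStep s s' → HeadStep (Lam.app s t) (Lam.app s' t)
  | abs {t t' : Lam} : HeadStep t t' → HeadStep (Lam.abs t) (Lam.abs t')

/-- `→h^k`: `k`-fold head reduction. -/
def HeadSteps : ℕ → Lam → Lam → Prop
  | 0, s, t => s = t
  | k + 1, s, t => ∃ u, HeadStep s u ∧ HeadSteps k u t

/-- `λ^n.t`: `n` abstractions in front of `t`. -/
def absN : ℕ → Lam → Lam
  | 0, t => t
  | n + 1, t => abs (absN n t)

/-- The head normal form `λx₁…xₙ. y A₁ ⋯ Aₘ` (de Bruijn head variable `y`). -/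
def mkHnf (n y : ℕ) (args : List Lam) : Lam := absN n (appList (var y) args)

/-- Head normal forms. -/
def IsHnf (M : Lam) : Prop := ∃ n y args, M = mkHnf n y args

/-- `M` has a head normal form (its head reduction reaches an hnf). -/
def HasHnf (M : Lam) : Prop := ∃ k H, HeadSteps k M H ∧ IsHnf H

/-- Nodes of a (clocked) Böhm Tree, seen as an infinite λ⊥-term. -/
inductive BTN : Type
  | lam : BTN
  | app : BTN
  | var : ℕ → BTN
  | bot : BTN
  deriving DecidableEq

/-- `CBT M p o a`: in the clocked Böhm Tree of `M`, the position `p`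
    (a sequence over `{0,1,2}`: `0` descends under an abstraction, `1` and `2` to the
    left and right parts of an application) carries the node `o` with annotation `a`
    (`a = some k` exactly at the roots of the coinductive blocks, where `k` is the number
    of head reduction steps needed to reach the hnf producing that block). -/
inductive CBT : Lam → List ℕ → BTN → Option ℕ → Prop
  | bot {M : Lam} : ¬ HasHnf M → CBT M [] BTN.bot none
  | lam {M : Lam} {k n y : ℕ} {args : List Lam} {i : ℕ} :
      HeadSteps k M (mkHnf n y args) → i < n →
      CBT M (List.replicate i 0) BTN.lam (if i = 0 then some k else none)
  | app {M : Lam} {k n y : ℕ} {args : List Lam} {j : ℕ} :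
      HeadSteps k M (mkHnf n y args) → j < args.length →
      CBT M (List.replicate n 0 ++ List.replicate j 1) BTN.app
        (if n = 0 ∧ j = 0 then some k else none)
  | var {M : Lam} {k n y : ℕ} {args : List Lam} :
      HeadSteps k M (mkHnf n y args) →
      CBT M (List.replicate n 0 ++ List.replicate args.length 1) (BTN.var y)
        (if n = 0 ∧ args.length = 0 then some k else none)
  | child {M : Lam} {k n y : ℕ} {args : List Lam} {i : ℕ} {q : List ℕ} {o : BTN} {a : Option ℕ} :
      HeadSteps k M (mkHnf n y args) → (h : i < args.length) →
      CBT (args.get ⟨i, h⟩) q o a →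
      CBT M (List.replicate n 0 ++ List.replicate (args.length - 1 - i) 1 ++ 2 :: q) o a

/-- The underlying (annotation-free) Böhm Tree: node `o` at position `p`. -/
def BTNode (M : Lam) (p : List ℕ) (o : BTN) : Prop := ∃ a, CBT M p o a

/-- `cBT M` and `cBT N` have the same underlying (annotation-free) Böhm Tree. -/
def SameBT (M N : Lam) : Prop := ∀ (p : List ℕ) (o : BTN), BTNode M p o ↔ BTNode N p o

/-- At every position of length `≥ l` where both clocked Böhm Trees are annotated,
    the annotation of `cBT M` is `≤` the annotation of `cBT N`. -/
def AnnLeFrom (l : ℕ) (M N : Lam) : Prop :=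
  ∀ (p : List ℕ) (o₁ o₂ : BTN) (k₁ k₂ : ℕ), l ≤ p.length →
    CBT M p o₁ (some k₁) → CBT N p o₂ (some k₂) → k₁ ≤ k₂

/-- At every position of length `≥ l` where both clocked Böhm Trees are annotated,
    the annotations of `cBT M` and `cBT N` are equal. -/
def AnnEqFrom (l : ℕ) (M N : Lam) : Prop :=
  ∀ (p : List ℕ) (o₁ o₂ : BTN) (k₁ k₂ : ℕ), l ≤ p.length →
    CBT M p o₁ (some k₁) → CBT N p o₂ (some k₂) → k₁ = k₂

/-- `cBT M ≤ cBT N`: same underlying Böhm Tree and pointwise `≤` on annotations;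
    i.e. `M` improves `N` globally. -/
def CBTle (M N : Lam) : Prop := SameBT M N ∧ AnnLeFrom 0 M N

/-- `M` improves `N` eventually. -/
def ImprovesEventually (M N : Lam) : Prop := SameBT M N ∧ ∃ l, AnnLeFrom l M N

/-- `M` matches `N` eventually. -/
def MatchesEventually (M N : Lam) : Prop := SameBT M N ∧ ∃ l, AnnEqFrom l M N


/-! ### Substitution and lifting infrastructure -/

theorem subst_lift_cancel (t : Lam) : ∀ k u, subst (lift k t) k u = t := by
  induction t with
  | var n =>
    intro k u
    simp only [lift, subst]
    split_ifs <;> (try simp only [lift, subst]) <;> (try split_ifs) <;>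
      first | rfl | (congr 1 <;> omega) | (exfalso; omega)
  | app s t ihs iht => intro k u; simp only [lift, subst, ihs, iht]
  | abs t ih => intro k u; simp only [lift, subst, ih]

theorem lift_lift (t : Lam) : ∀ i j, i ≤ j →
    lift i (lift j t) = lift (j + 1) (lift i t) := by
  induction t with
  | var n =>
    intro i j hij
    simp only [lift, subst]
    split_ifs <;> (try simp only [lift, subst]) <;> (try split_ifs) <;>
      first | rfl | (congr 1 <;> omega) | (exfalso; omega)
  | app s t ihs iht => intro i j hij; simp only [lift, ihs _ _ hij, iht _ _ hij]
  | abs t ih => intro i j hij; simp only [lift]; rw [ih (i+1) (j+1) (by omega)]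

theorem lift_subst_le (t : Lam) : ∀ i k u, i ≤ k →
    lift i (subst t k u) = subst (lift i t) (k + 1) (lift i u) := by
  induction t with
  | var n =>
    intro i k u hik
    simp only [lift, subst]
    split_ifs <;> (try simp only [lift, subst]) <;> (try split_ifs) <;>
      first | rfl | (congr 1 <;> omega) | (exfalso; omega)
  | app s t ihs iht => intro i k u hik; simp only [lift, subst, ihs _ _ _ hik, iht _ _ _ hik]
  | abs t ih =>
    intro i k u hik
    simp only [lift, subst]
    rw [ih (i+1) (k+1) _ (by omega), lift_lift u 0 i (by omega)]

theorem lift_subst_ge (t : Lam) : ∀ i k u, k ≤ i →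
    lift i (subst t k u) = subst (lift (i + 1) t) k (lift i u) := by
  induction t with
  | var n =>
    intro i k u hki
    simp only [lift, subst]
    split_ifs <;> (try simp only [lift, subst]) <;> (try split_ifs) <;>
      first | rfl | (congr 1 <;> omega) | (exfalso; omega)
  | app s t ihs iht => intro i k u hki; simp only [lift, subst, ihs _ _ _ hki, iht _ _ _ hki]
  | abs t ih =>
    intro i k u hki
    simp only [lift, subst]
    rw [ih (i+1) (k+1) _ (by omega), lift_lift u 0 i (by omega)]

theorem subst_subst (t : Lam) : ∀ i k u v, i ≤ k →
    subst (subst t i u) k v = subst (subst t (k + 1) (lift i v)) i (subst u k v) := by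
  induction t with
  | var n =>
    intro i k u v hik
    simp only [lift, subst]
    split_ifs <;> (try simp only [lift, subst]) <;> (try split_ifs) <;>
      first
        | rfl | (congr 1 <;> omega) | (exfalso; omega)
        | (rw [subst_lift_cancel]) | (exact (subst_lift_cancel _ _ _).symm)
  | app s t ihs iht => intro i k u v hik; simp only [subst, ihs _ _ _ _ hik, iht _ _ _ _ hik]
  | abs t ih =>
    intro i k u v hik
    simp only [subst]
    rw [ih (i+1) (k+1) _ _ (by omega), lift_lift v 0 i (by omega),
      lift_subst_le u 0 k _ (by omega)]

theorem subst_var_self' (n : ℕ) {u : Lam} : subst (var n) n u = u := by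
  simp only [subst]
  rw [if_neg (by omega)]
  simp

theorem subst_var_gt' {n k : ℕ} (h : k < n) {u : Lam} : subst (var n) k u = var (n - 1) := by
  simp only [subst]; rw [if_neg (by omega), if_neg (by omega)]

theorem subst_var_lt {n k : ℕ} (u : Lam) (h : n < k) : subst (var n) k u = var n := by
  simp only [subst]; rw [if_pos h]

/-! ### Parallel reduction -/

inductive Par : Lam → Lam → Prop
  | var (n : ℕ) : Par (var n) (var n)
  | app {s s' t t' : Lam} : Par s s' → Par t t' → Par (app s t) (app s' t')
  | abs {t t' : Lam} : Par t t' → Par (abs t) (abs t')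
  | beta {t t' u u' : Lam} : Par t t' → Par u u' → Par (app (abs t) u) (subst t' 0 u')

theorem Par.refl : ∀ t : Lam, Par t t := by
  intro t
  induction t with
  | var n => exact Par.var n
  | app s t ihs iht => exact Par.app ihs iht
  | abs t ih => exact Par.abs ih

theorem par_lift {t t' : Lam} (h : Par t t') : ∀ d, Par (lift d t) (lift d t') := by
  induction h with
  | var n => intro d; exact Par.refl _
  | app hs ht ihs iht => intro d; exact Par.app (ihs d) (iht d)
  | abs ht ih => intro d; exact Par.abs (ih (d+1))
  | @beta t t' u u' ht hu iht ihu =>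
    intro d
    simp only [lift]
    rw [lift_subst_ge t' d 0 u' (by omega)]
    exact Par.beta (iht (d+1)) (ihu d)

theorem par_subst {t t' : Lam} (h : Par t t') :
    ∀ k {u u' : Lam}, Par u u' → Par (subst t k u) (subst t' k u') := by
  induction h with
  | var n =>
    intro k u u' hu
    rcases lt_trichotomy n k with h | h | h
    · simp only [subst]; rw [if_pos h, if_pos h]; exact Par.refl _
    · subst h; rw [subst_var_self', subst_var_self']; exact hu
    · rw [subst_var_gt' h, subst_var_gt' h]; exact Par.refl _
  | app hs ht ihs iht => intro k u u' hu; exact Par.app (ihs k hu) (iht k hu)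
  | abs ht ih =>
    intro k u u' hu
    exact Par.abs (ih (k+1) (par_lift hu 0))
  | @beta a a' b b' ha hb iha ihb =>
    intro k u u' hu
    simp only [subst]
    rw [subst_subst a' 0 k b' u' (by omega)]
    exact Par.beta (iha (k+1) (par_lift hu 0)) (ihb k hu)

/-! ### Par inversions, relation to Beta, confluence -/

theorem par_var_inv {n : ℕ} {X : Lam} (h : Par (var n) X) : X = var n := by
  cases h; rfl

theorem par_abs_inv {t X : Lam} (h : Par (abs t) X) : ∃ t', X = abs t' ∧ Par t t' := by
  cases h with
  | abs ht => exact ⟨_, rfl, ht⟩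

theorem beta_par {s t : Lam} (h : Beta s t) : Par s t := by
  induction h with
  | beta t u => exact Par.beta (Par.refl t) (Par.refl u)
  | appL t _ ih => exact Par.app ih (Par.refl t)
  | appR s _ ih => exact Par.app (Par.refl s) ih
  | abs _ ih => exact Par.abs ih

theorem betaStar_appL {s s' : Lam} (t : Lam) (h : BetaStar s s') :
    BetaStar (app s t) (app s' t) :=
  Relation.ReflTransGen.lift (fun x => app x t) (fun _ _ h => Beta.appL t h) _ _ h

theorem betaStar_appR (s : Lam) {t t' : Lam} (h : BetaStar t t') :
    BetaStar (app s t) (app s t') :=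
  Relation.ReflTransGen.lift (fun x => app s x) (fun _ _ h => Beta.appR s h) _ _ h

theorem betaStar_abs {t t' : Lam} (h : BetaStar t t') :
    BetaStar (abs t) (abs t') :=
  Relation.ReflTransGen.lift (fun x => abs x) (fun _ _ h => Beta.abs h) _ _ h

theorem par_betaStar {s t : Lam} (h : Par s t) : BetaStar s t := by
  induction h with
  | var n => exact Relation.ReflTransGen.refl
  | app _ _ ihs iht => exact (betaStar_appL _ ihs).trans (betaStar_appR _ iht)
  | abs _ ih => exact betaStar_abs ih
  | @beta t t' u u' _ _ iht ihu =>
    exact ((betaStar_appL _ (betaStar_abs iht)).trans (betaStar_appR _ ihu)).trans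
      (Relation.ReflTransGen.single (Beta.beta t' u'))

/-- Complete development. -/
def cd : Lam → Lam
  | var n => var n
  | abs t => abs (cd t)
  | app (abs t) u => subst (cd t) 0 (cd u)
  | app (var n) u => app (var n) (cd u)
  | app (app a b) u => app (cd (app a b)) (cd u)

theorem par_cd {s t : Lam} (h : Par s t) : Par t (cd s) := by
  induction h with
  | var n => exact Par.refl _
  | @app s s' t t' hs ht ihs iht =>
    cases s with
    | var n =>
      rw [par_var_inv hs] at *
      exact Par.app (Par.refl _) iht
    | app a b => exact Par.app ihs iht
    | abs w =>
      obtain ⟨w', rfl, hw⟩ := par_abs_inv hs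
      have hcd : Par (abs w') (cd (abs w)) := ihs
      simp only [cd] at hcd
      simp only [cd]
      cases hcd with
      | abs hw' => exact Par.beta hw' iht
  | abs _ ih => exact Par.abs ih
  | @beta a a' b b' _ _ iha ihb =>
    simp only [cd]
    exact par_subst iha 0 ihb

theorem par_diamond {a b c : Lam} (h1 : Par a b) (h2 : Par a c) :
    ∃ d, Par b d ∧ Par c d :=
  ⟨cd a, par_cd h1, par_cd h2⟩

theorem parStar_strip {a b c : Lam} (h1 : Par a b) (h2 : Relation.ReflTransGen Par a c) :
    ∃ d, Relation.ReflTransGen Par b d ∧ Par c d := by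
  induction h2 with
  | refl => exact ⟨b, Relation.ReflTransGen.refl, h1⟩
  | tail _ hcd ih =>
    obtain ⟨d, hbd, hcd'⟩ := ih
    obtain ⟨e, hde, hce⟩ := par_diamond hcd' hcd
    exact ⟨e, hbd.tail hde, hce⟩

theorem parStar_diamond {a b c : Lam} (h1 : Relation.ReflTransGen Par a b)
    (h2 : Relation.ReflTransGen Par a c) :
    ∃ d, Relation.ReflTransGen Par b d ∧ Relation.ReflTransGen Par c d := by
  induction h1 with
  | refl => exact ⟨c, h2, Relation.ReflTransGen.refl⟩
  | tail _ hab ih =>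
    obtain ⟨d, hbd, hcd⟩ := ih
    obtain ⟨e, hbe, hde⟩ := parStar_strip hab hbd
    exact ⟨e, hbe, hcd.tail hde⟩

theorem parStar_betaStar {a b : Lam} (h : Relation.ReflTransGen Par a b) : BetaStar a b := by
  induction h with
  | refl => exact Relation.ReflTransGen.refl
  | tail _ h ih => exact ih.trans (par_betaStar h)

theorem conv_common_reduct {M N : Lam} (h : Conv M N) :
    ∃ L, BetaStar M L ∧ BetaStar N L := by
  have key : ∀ {M N : Lam}, Conv M N →
      ∃ L, Relation.ReflTransGen Par M L ∧ Relation.ReflTransGen Par N L := by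
    intro M N h
    induction h with
    | @rel s t hst => exact ⟨t, Relation.ReflTransGen.single (beta_par hst),
        Relation.ReflTransGen.refl⟩
    | refl s => exact ⟨s, Relation.ReflTransGen.refl, Relation.ReflTransGen.refl⟩
    | symm _ ih => obtain ⟨L, h1, h2⟩ := ih; exact ⟨L, h2, h1⟩
    | trans _ _ ih1 ih2 =>
      obtain ⟨L1, hM, ht1⟩ := ih1
      obtain ⟨L2, ht2, hu⟩ := ih2
      obtain ⟨L, hL1, hL2⟩ := parStar_diamond ht1 ht2
      exact ⟨L, hM.trans hL1, hu.trans hL2⟩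
  obtain ⟨L, h1, h2⟩ := key h
  exact ⟨L, parStar_betaStar h1, parStar_betaStar h2⟩

/-! ### Head reduction basics -/

/-- Reflexive-transitive closure of head reduction. -/
def HSStar : Lam → Lam → Prop := Relation.ReflTransGen HeadStep

theorem headSteps_trans {k j : ℕ} {a b c : Lam} (h1 : HeadSteps k a b)
    (h2 : HeadSteps j b c) : HeadSteps (k + j) a c := by
  induction k generalizing a with
  | zero => cases h1; simpa using h2
  | succ k ih =>
    obtain ⟨u, hu, h1'⟩ := h1
    have he : k + 1 + j = (k + j) + 1 := by omega
    rw [he]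
    exact ⟨u, hu, ih h1'⟩

theorem headSteps_exists_iff {a b : Lam} : (∃ k, HeadSteps k a b) ↔ HSStar a b := by
  constructor
  · rintro ⟨k, h⟩
    induction k generalizing a with
    | zero => cases h; exact Relation.ReflTransGen.refl
    | succ k ih =>
      obtain ⟨u, hu, h'⟩ := h
      exact Relation.ReflTransGen.head hu (ih h')
  · intro h
    induction h with
    | refl => exact ⟨0, rfl⟩
    | tail _ h ih =>
      obtain ⟨k, hk⟩ := ih
      exact ⟨k + 1, headSteps_trans hk ⟨_, h, rfl⟩⟩

theorem hsStar_of_headSteps {k : ℕ} {a b : Lam} (h : HeadSteps k a b) : HSStar a b :=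
  headSteps_exists_iff.1 ⟨k, h⟩

theorem isAbs_iff {t : Lam} : IsAbs t ↔ ∃ w, t = abs w := by
  cases t <;> simp [IsAbs]

theorem headStep_det {a b c : Lam} (h1 : HeadStep a b) (h2 : HeadStep a c) : b = c := by
  induction h1 generalizing c with
  | beta t u =>
    cases h2 with
    | beta => rfl
    | app t hna _ => exact absurd trivial hna
  | app t hna hs ih =>
    cases h2 with
    | beta => exact absurd trivial hna
    | app _ _ hs2 => rw [ih hs2]
  | abs hs ih =>
    cases h2 with
    | abs hs2 => rw [ih hs2]

/-- Spine terms: a variable applied to arguments. -/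
inductive Spine : Lam → Prop
  | var (n : ℕ) : Spine (var n)
  | app {s : Lam} (t : Lam) : Spine s → Spine (app s t)

/-- Structural characterization of hnf's. -/
inductive HnfP : Lam → Prop
  | spine {t : Lam} : Spine t → HnfP t
  | abs {t : Lam} : HnfP t → HnfP (abs t)

theorem spine_appList {y : ℕ} (args : List Lam) : Spine (appList (var y) args) := by
  induction args using List.reverseRecOn with
  | nil => exact Spine.var y
  | append_singleton l a ih =>
    simp only [appList, List.foldl_append, List.foldl_cons, List.foldl_nil] at *
    exact Spine.app a ih

theorem spine_eq_appList {t : Lam} (h : Spine t) : ∃ y args, t = appList (var y) args := by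
  induction h with
  | var n => exact ⟨n, [], rfl⟩
  | app t _ ih =>
    obtain ⟨y, args, rfl⟩ := ih
    refine ⟨y, args ++ [t], ?_⟩
    simp [appList, List.foldl_append]

theorem hnfP_iff_isHnf {t : Lam} : HnfP t ↔ IsHnf t := by
  constructor
  · intro h
    induction h with
    | spine h =>
      obtain ⟨y, args, rfl⟩ := spine_eq_appList h
      exact ⟨0, y, args, rfl⟩
    | abs _ ih =>
      obtain ⟨n, y, args, rfl⟩ := ih
      exact ⟨n + 1, y, args, rfl⟩
  · rintro ⟨n, y, args, rfl⟩
    induction n with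
    | zero => exact HnfP.spine (spine_appList args)
    | succ n ih => exact HnfP.abs ih

/-! ### More head reduction facts -/

theorem spine_not_abs {t : Lam} (h : Spine t) : ¬ IsAbs t := by
  cases h <;> simp [IsAbs]

theorem spine_no_headStep {t X : Lam} (h : Spine t) : ¬ HeadStep t X := by
  induction h generalizing X with
  | var n => intro hs; cases hs
  | app t hsp ih =>
    intro hs
    cases hs with
    | beta t u => exact spine_not_abs hsp trivial
    | app _ _ h => exact ih h

theorem hnfP_no_headStep {t X : Lam} (h : HnfP t) : ¬ HeadStep t X := by
  induction h generalizing X with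
  | spine h => exact spine_no_headStep h
  | abs _ ih =>
    intro hs
    cases hs with
    | abs h => exact ih h

theorem headSteps_hnf_unique {M H1 H2 : Lam} {k1 k2 : ℕ}
    (h1 : HeadSteps k1 M H1) (h2 : HeadSteps k2 M H2)
    (hH1 : HnfP H1) (hH2 : HnfP H2) : k1 = k2 ∧ H1 = H2 := by
  induction k1 generalizing M k2 with
  | zero =>
    cases h1
    cases k2 with
    | zero => cases h2; exact ⟨rfl, rfl⟩
    | succ k2 => obtain ⟨u, hu, _⟩ := h2; exact absurd hu (hnfP_no_headStep hH1)
  | succ k1 ih =>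
    obtain ⟨u, hu, h1'⟩ := h1
    cases k2 with
    | zero => cases h2; exact absurd hu (hnfP_no_headStep hH2)
    | succ k2 =>
      obtain ⟨v, hv, h2'⟩ := h2
      cases headStep_det hu hv
      obtain ⟨hk, hH⟩ := ih h1' h2'
      exact ⟨by omega, hH⟩

theorem appList_ne_abs {y : ℕ} (args : List Lam) (w : Lam) :
    appList (var y) args ≠ abs w := by
  induction args using List.reverseRecOn with
  | nil => simp [appList]
  | append_singleton l a ih => simp [appList, List.foldl_append]

theorem appList_inj {y y' : ℕ} {args args' : List Lam}
    (h : appList (var y) args = appList (var y') args') : y = y' ∧ args = args' := by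
  induction args using List.reverseRecOn generalizing args' with
  | nil =>
    induction args' using List.reverseRecOn with
    | nil => simp [appList] at h; exact ⟨h, rfl⟩
    | append_singleton l a ih => simp [appList, List.foldl_append] at h
  | append_singleton l a ih =>
    induction args' using List.reverseRecOn with
    | nil => simp [appList, List.foldl_append] at h
    | append_singleton l' a' _ =>
      simp only [appList, List.foldl_append, List.foldl_cons, List.foldl_nil] at h
      injection h with h1 h2
      obtain ⟨hy, hl⟩ := ih (show appList (var y) l = appList (var y') l' from h1)
      subst hy; subst hl; subst h2
      exact ⟨rfl, rfl⟩

theorem absN_not_abs_inj {n n' : ℕ} {t t' : Lam} (ht : ¬ IsAbs t) (ht' : ¬ IsAbs t')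
    (h : absN n t = absN n' t') : n = n' ∧ t = t' := by
  induction n generalizing n' with
  | zero =>
    cases n' with
    | zero => exact ⟨rfl, h⟩
    | succ n' =>
      exfalso; apply ht
      simp only [absN] at h
      rw [h]; trivial
  | succ n ih =>
    cases n' with
    | zero =>
      exfalso; apply ht'
      simp only [absN] at h
      rw [← h]; trivial
    | succ n' =>
      simp only [absN] at h
      injection h with h
      obtain ⟨h1, h2⟩ := ih h
      exact ⟨by omega, h2⟩

theorem mkHnf_inj {n n' y y' : ℕ} {args args' : List Lam}
    (h : mkHnf n y args = mkHnf n' y' args') : n = n' ∧ y = y' ∧ args = args' := by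
  have hna : ¬ IsAbs (appList (var y) args) := spine_not_abs (spine_appList args)
  have hna' : ¬ IsAbs (appList (var y') args') := spine_not_abs (spine_appList args')
  obtain ⟨h1, h2⟩ := absN_not_abs_inj hna hna' h
  obtain ⟨h3, h4⟩ := appList_inj h2
  exact ⟨h1, h3, h4⟩

/-! ### Head step congruences and decomposition -/

theorem headStep_beta' {s t : Lam} (h : Beta s t) : True := trivial

theorem headStep_sub_beta {s t : Lam} (h : HeadStep s t) : Beta s t := by
  induction h with
  | beta t u => exact Beta.beta t u
  | app t _ _ ih => exact Beta.appL t ih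
  | abs _ ih => exact Beta.abs ih

theorem hsStar_abs {t t' : Lam} (h : HSStar t t') : HSStar (abs t) (abs t') :=
  Relation.ReflTransGen.lift (fun x => abs x) (fun _ _ h => HeadStep.abs h) _ _ h

theorem hsStar_abs_inv {t X : Lam} (h : HSStar (abs t) X) :
    ∃ t', X = abs t' ∧ HSStar t t' := by
  induction h with
  | refl => exact ⟨t, rfl, Relation.ReflTransGen.refl⟩
  | tail _ hstep ih =>
    obtain ⟨t', rfl, ht⟩ := ih
    cases hstep with
    | abs h => exact ⟨_, rfl, ht.tail h⟩

theorem headStep_not_var {n : ℕ} {X : Lam} (h : HeadStep (var n) X) : False := by cases h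

/-- A term with a head step is an application. -/
theorem headStep_src_app {s X : Lam} (h : HeadStep s X) (hna : ¬ IsAbs s) :
    ∃ a b, s = app a b := by
  cases h with
  | beta t u => exact ⟨_, _, rfl⟩
  | app t _ _ => exact ⟨_, _, rfl⟩
  | abs _ => exact absurd trivial hna

theorem headStep_subst {a a' : Lam} (h : HeadStep a a') :
    ∀ k b, HeadStep (subst a k b) (subst a' k b) := by
  induction h with
  | beta t u =>
    intro k b
    simp only [subst]
    rw [subst_subst t 0 k u b (by omega)]
    exact HeadStep.beta _ _
  | @app s s' t hna hs ih =>
    intro k b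
    obtain ⟨x, y, rfl⟩ := headStep_src_app hs hna
    simp only [subst]
    exact HeadStep.app _ (by simp [IsAbs, subst]) (by simpa [subst] using ih k b)
  | abs _ ih =>
    intro k b
    simp only [subst]
    exact HeadStep.abs (ih (k+1) (lift 0 b))

theorem hsStar_subst {a a' : Lam} (h : HSStar a a') (k : ℕ) (b : Lam) :
    HSStar (subst a k b) (subst a' k b) :=
  Relation.ReflTransGen.lift (fun x => subst x k b) (fun _ _ h => headStep_subst h k b) _ _ h

theorem headStep_lift {a a' : Lam} (h : HeadStep a a') :
    ∀ d, HeadStep (lift d a) (lift d a') := by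
  induction h with
  | beta t u =>
    intro d
    simp only [lift]
    rw [lift_subst_ge t d 0 u (by omega)]
    exact HeadStep.beta _ _
  | @app s s' t hna hs ih =>
    intro d
    obtain ⟨x, y, rfl⟩ := headStep_src_app hs hna
    simp only [lift]
    exact HeadStep.app _ (by simp [IsAbs, lift]) (by simpa [lift] using ih d)
  | abs _ ih =>
    intro d
    simp only [lift]
    exact HeadStep.abs (ih (d+1))

theorem hsStar_lift {a a' : Lam} (h : HSStar a a') (d : ℕ) :
    HSStar (lift d a) (lift d a') :=
  Relation.ReflTransGen.lift (fun x => lift d x) (fun _ _ h => headStep_lift h d) _ _ h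

/-- Decomposition of a head reduction of `s` lifted through `app s v`. -/
theorem hsStar_app_decomp {s s₁ : Lam} (h : HSStar s s₁) (v : Lam) :
    HSStar (app s v) (app s₁ v) ∨
    ∃ w w₁, s₁ = abs w₁ ∧ HSStar (app s v) (app (abs w) v) ∧ HSStar w w₁ := by
  induction h using Relation.ReflTransGen.head_induction_on with
  | refl =>
    cases s₁ with
    | abs w => exact Or.inr ⟨w, w, rfl, Relation.ReflTransGen.refl, Relation.ReflTransGen.refl⟩
    | var n => exact Or.inl Relation.ReflTransGen.refl
    | app a b => exact Or.inl Relation.ReflTransGen.refl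
  | @head s s₂ hstep hrest ih =>
    by_cases habs : IsAbs s
    · obtain ⟨w, rfl⟩ := isAbs_iff.1 habs
      obtain ⟨w₁, rfl, hw⟩ := hsStar_abs_inv (Relation.ReflTransGen.head hstep hrest)
      exact Or.inr ⟨w, w₁, rfl, Relation.ReflTransGen.refl, hw⟩
    · have hlift : HeadStep (app s v) (app s₂ v) := HeadStep.app v habs hstep
      rcases ih with h1 | ⟨w, w₁, rfl, h2, h3⟩
      · exact Or.inl (Relation.ReflTransGen.head hlift h1)
      · exact Or.inr ⟨w, w₁, rfl, Relation.ReflTransGen.head hlift h2, h3⟩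

/-! ### Internal parallel reduction -/

/-- Internal parallel reduction: parallel reduction not contracting the head redex. -/
inductive ParI : Lam → Lam → Prop
  | var (n : ℕ) : ParI (var n) (var n)
  | abs {t t' : Lam} : ParI t t' → ParI (abs t) (abs t')
  | app {s s' t t' : Lam} : ¬ IsAbs s → ParI s s' → Par t t' →
      ParI (app s t) (app s' t')
  | appAbs {w w₀ w' t t' : Lam} : HSStar w w₀ → ParI w₀ w' → Par t t' →
      ParI (app (abs w) t) (app (abs w') t')

theorem lift_isAbs {d : ℕ} {s : Lam} : IsAbs (lift d s) ↔ IsAbs s := by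
  cases s with
  | var n => simp only [lift]; split <;> simp [IsAbs]
  | app a b => simp [lift, IsAbs]
  | abs t => simp [lift, IsAbs]

theorem parI_refl : ∀ t : Lam, ParI t t := by
  intro t
  induction t with
  | var n => exact ParI.var n
  | app s t ihs _ =>
    by_cases h : IsAbs s
    · obtain ⟨w, rfl⟩ := isAbs_iff.1 h
      exact ParI.appAbs Relation.ReflTransGen.refl (by cases ihs with
        | abs h => exact h) (Par.refl t)
    · exact ParI.app h ihs (Par.refl t)
  | abs t ih => exact ParI.abs ih

theorem parI_shape_nonabs {s s' : Lam} (h : ParI s s') (hna : ¬ IsAbs s) : ¬ IsAbs s' := by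
  cases h with
  | var n => exact hna
  | abs _ => exact absurd trivial hna
  | app _ _ _ => simp [IsAbs]
  | appAbs _ _ _ => simp [IsAbs]

theorem parI_abs_inv {w X : Lam} (h : ParI (abs w) X) : ∃ w', X = abs w' ∧ ParI w w' := by
  cases h with
  | abs h => exact ⟨_, rfl, h⟩

theorem parI_lift {t t' : Lam} (h : ParI t t') : ∀ d, ParI (lift d t) (lift d t') := by
  induction h with
  | var n => intro d; exact parI_refl _
  | abs _ ih => intro d; exact ParI.abs (ih (d+1))
  | @app s s' t t' hna hs hp ih =>
    intro d
    simp only [lift]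
    exact ParI.app (fun habs => hna (lift_isAbs.1 habs)) (ih d) (par_lift hp d)
  | @appAbs w w₀ w' t t' hw hw' hp ih =>
    intro d
    simp only [lift]
    exact ParI.appAbs (hsStar_lift hw (d+1)) (ih (d+1)) (par_lift hp d)

theorem parI_spine {s s' : Lam} (h : ParI s s') (hsp : Spine s') : Spine s := by
  induction h with
  | var n => exact Spine.var n
  | abs _ _ => cases hsp
  | app _ _ _ ih =>
    cases hsp with
    | app _ h => exact Spine.app _ (ih h)
  | appAbs _ _ _ _ =>
    cases hsp with
    | app _ h => cases h

theorem parI_hnfP {X H : Lam} (h : ParI X H) (hh : HnfP H) : HnfP X := by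
  induction hh generalizing X with
  | spine hs => exact HnfP.spine (parI_spine h hs)
  | abs _ ih =>
    cases h with
    | abs hw => exact HnfP.abs (ih hw)

/-! ### The Takahashi-style factorization -/

theorem parI_var_inv {n : ℕ} {X : Lam} (h : ParI (var n) X) : X = var n := by
  cases h; rfl

theorem parI_app_mk {x x' v v' : Lam} (h : ParI x x') (hv : Par v v') :
    ParI (app x v) (app x' v') := by
  by_cases habs : IsAbs x
  · obtain ⟨w, rfl⟩ := isAbs_iff.1 habs
    obtain ⟨w', rfl, hw⟩ := parI_abs_inv h
    exact ParI.appAbs Relation.ReflTransGen.refl hw hv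
  · exact ParI.app habs h hv

theorem parI_app_of_hsStar {x e x' v v' : Lam} (hx : HSStar x e) (he : ParI e x')
    (hv : Par v v') : ∃ r, HSStar (app x v) r ∧ ParI r (app x' v') := by
  rcases hsStar_app_decomp hx v with h1 | ⟨w, w₁, rfl, h2, h3⟩
  · exact ⟨app e v, h1, parI_app_mk he hv⟩
  · obtain ⟨w', rfl, hw⟩ := parI_abs_inv he
    exact ⟨app (abs w) v, h2, ParI.appAbs h3 hw hv⟩

/-- Substitution lemma for internal parallel reduction. -/
theorem parI_subst_aux {a a' : Lam} (h : ParI a a') :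
    ∀ (k : ℕ) {b b' : Lam}, Par b b' → (∃ c, HSStar b c ∧ ParI c b') →
    ∃ e, HSStar (subst a k b) e ∧ ParI e (subst a' k b') := by
  induction h with
  | var n =>
    intro k b b' hb hT
    rcases lt_trichotomy n k with h | h | h
    · rw [subst_var_lt _ h, subst_var_lt _ h]
      exact ⟨_, Relation.ReflTransGen.refl, parI_refl _⟩
    · subst h; rw [subst_var_self', subst_var_self']
      exact hT
    · rw [subst_var_gt' h, subst_var_gt' h]
      exact ⟨_, Relation.ReflTransGen.refl, parI_refl _⟩
  | abs _ ih =>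
    intro k b b' hb hT
    simp only [subst]
    obtain ⟨c, h1, h2⟩ := hT
    obtain ⟨e, he, hp⟩ := ih (k+1) (par_lift hb 0)
      ⟨lift 0 c, hsStar_lift h1 0, parI_lift h2 0⟩
    exact ⟨abs e, hsStar_abs he, ParI.abs hp⟩
  | @app s s' t t' hna hs hp ih =>
    intro k b b' hb hT
    simp only [subst]
    have hvv : Par (subst t k b) (subst t' k b') := par_subst hp k hb
    cases s with
    | abs w => exact absurd trivial hna
    | var n =>
      rw [parI_var_inv hs]
      rcases lt_trichotomy n k with h | h | h
      · rw [subst_var_lt _ h, subst_var_lt _ h]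
        exact ⟨_, Relation.ReflTransGen.refl,
          ParI.app (by simp [IsAbs]) (parI_refl _) hvv⟩
      · subst h; rw [subst_var_self', subst_var_self']
        obtain ⟨c, h1, h2⟩ := hT
        exact parI_app_of_hsStar h1 h2 hvv
      · rw [subst_var_gt' h, subst_var_gt' h]
        exact ⟨_, Relation.ReflTransGen.refl,
          ParI.app (by simp [IsAbs]) (parI_refl _) hvv⟩
    | app x y =>
      obtain ⟨e, h1, h2⟩ := ih k hb hT
      exact parI_app_of_hsStar h1 h2 hvv
  | @appAbs w w₀ w' t t' hw hw₀ hp ih =>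
    intro k b b' hb hT
    simp only [subst]
    obtain ⟨c, hc1, hc2⟩ := hT
    obtain ⟨e₀, he₀, hp₀⟩ := ih (k+1) (par_lift hb 0)
      ⟨lift 0 c, hsStar_lift hc1 0, parI_lift hc2 0⟩
    refine ⟨_, Relation.ReflTransGen.refl,
      ParI.appAbs ((hsStar_subst hw (k+1) (lift 0 b)).trans he₀) hp₀ (par_subst hp k hb)⟩

/-- Takahashi factorization: a parallel step factors as head steps then internal. -/
theorem par_factor {M N : Lam} (h : Par M N) : ∃ M', HSStar M M' ∧ ParI M' N := by
  induction h with
  | var n => exact ⟨_, Relation.ReflTransGen.refl, parI_refl _⟩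
  | @app s s' t t' hs ht ihs iht =>
    obtain ⟨s₀, h1, h2⟩ := ihs
    exact parI_app_of_hsStar h1 h2 ht
  | abs _ ih =>
    obtain ⟨t₀, h1, h2⟩ := ih
    exact ⟨abs t₀, hsStar_abs h1, ParI.abs h2⟩
  | @beta t t' u u' ht hu iht ihu =>
    obtain ⟨t₀, h1, h2⟩ := iht
    obtain ⟨e, h4, h5⟩ := parI_subst_aux h2 0 hu ihu
    exact ⟨e, (Relation.ReflTransGen.single (HeadStep.beta t u)).trans
      ((hsStar_subst h1 0 u).trans h4), h5⟩

/-- Internal steps can be pushed past a head step. -/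
theorem parI_headStep {P Q Q' : Lam} (h : ParI P Q) (hs : HeadStep Q Q') :
    ∃ P', HSStar P P' ∧ ParI P' Q' := by
  induction h generalizing Q' with
  | var n => cases hs
  | abs _ ih =>
    cases hs with
    | abs h =>
      obtain ⟨t₁, h1, h2⟩ := ih h
      exact ⟨abs t₁, hsStar_abs h1, ParI.abs h2⟩
  | @app s s' t t' hna hsI hp ih =>
    have hna' := parI_shape_nonabs hsI hna
    cases hs with
    | beta _ _ => exact absurd trivial hna'
    | app _ hna2 hstep =>
      obtain ⟨s₁, h1, h2⟩ := ih hstep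
      exact parI_app_of_hsStar h1 h2 hp
  | @appAbs w w₀ w' t t' hw hw₀ hp ih =>
    cases hs with
    | beta _ _ =>
      obtain ⟨e, h4, h5⟩ := parI_subst_aux hw₀ 0 hp (par_factor hp)
      exact ⟨e, (Relation.ReflTransGen.single (HeadStep.beta w t)).trans
        ((hsStar_subst hw 0 t).trans h4), h5⟩
    | app _ hna2 _ => exact absurd trivial hna2

/-! ### Preservation of head normalization -/

theorem hasHnf_headExpand {a b : Lam} (h : HSStar a b) (hb : HasHnf b) : HasHnf a := by
  obtain ⟨j, hj⟩ := headSteps_exists_iff.2 h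
  obtain ⟨k, H, hk, hH⟩ := hb
  exact ⟨j + k, H, headSteps_trans hj hk, hH⟩

theorem parI_hasHnf {k : ℕ} : ∀ {Q H R : Lam}, HeadSteps k Q H → HnfP H →
    ParI R Q → HasHnf R := by
  induction k with
  | zero =>
    intro Q H R hq hH h
    cases hq
    exact ⟨0, R, rfl, hnfP_iff_isHnf.1 (parI_hnfP h hH)⟩
  | succ k ih =>
    intro Q H R hq hH h
    obtain ⟨u, hu, hrest⟩ := hq
    obtain ⟨R₁, h1, h2⟩ := parI_headStep h hu
    exact hasHnf_headExpand h1 (ih hrest hH h2)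

theorem par_hasHnf_back {P Q : Lam} (h : Par P Q) (hq : HasHnf Q) : HasHnf P := by
  obtain ⟨P₀, h1, h2⟩ := par_factor h
  obtain ⟨k, H, hk, hH⟩ := hq
  exact hasHnf_headExpand h1 (parI_hasHnf hk (hnfP_iff_isHnf.2 hH) h2)

theorem betaStar_hasHnf_back {P Q : Lam} (h : BetaStar P Q) (hq : HasHnf Q) : HasHnf P := by
  induction h using Relation.ReflTransGen.head_induction_on with
  | refl => exact hq
  | head hstep _ ih => exact par_hasHnf_back (beta_par hstep) ih

/-! ### Forward simulation with clocks -/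

theorem not_isAbs_app (a b : Lam) : ¬ IsAbs (app a b) := by simp [IsAbs]

theorem par_headStep_commute {P P' Q : Lam} (hs : HeadStep P P') (hpar : Par P Q) :
    Par P' Q ∨ ∃ Q', HeadStep Q Q' ∧ Par P' Q' ∧ (IsAbs Q → IsAbs P) := by
  induction hs generalizing Q with
  | beta t u =>
    cases hpar with
    | beta ht hu => exact Or.inl (par_subst ht 0 hu)
    | app hs ht =>
      obtain ⟨t₂, rfl, ht₂⟩ := par_abs_inv hs
      exact Or.inr ⟨_, HeadStep.beta _ _, par_subst ht₂ 0 ht,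
        fun habs => absurd habs (not_isAbs_app _ _)⟩
  | @app s s' v hna hstep ih =>
    cases hpar with
    | beta ht hu => exact absurd trivial hna
    | @app _ s₂ _ v₂ hs hv =>
      rcases ih hs with h1 | ⟨s₂', hstep₂, hpar₂, himpl⟩
      · exact Or.inl (Par.app h1 hv)
      · exact Or.inr ⟨app s₂' v₂, HeadStep.app _ (fun h => hna (himpl h)) hstep₂,
          Par.app hpar₂ hv, fun habs => absurd habs (not_isAbs_app _ _)⟩
  | @abs t t' hstep ih =>
    cases hpar with
    | abs ht =>
      rcases ih ht with h1 | ⟨t₂', hstep₂, hpar₂, _⟩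
      · exact Or.inl (Par.abs h1)
      · exact Or.inr ⟨_, HeadStep.abs hstep₂, Par.abs hpar₂, fun _ => trivial⟩

theorem par_absN_inv {n : ℕ} {t Q : Lam} (h : Par (absN n t) Q) :
    ∃ t', Q = absN n t' ∧ Par t t' := by
  induction n generalizing Q with
  | zero => exact ⟨Q, rfl, h⟩
  | succ n ih =>
    obtain ⟨w, rfl, hw⟩ := par_abs_inv h
    obtain ⟨t', rfl, ht⟩ := ih hw
    exact ⟨t', rfl, ht⟩

theorem par_app_inv {a b Q : Lam} (h : Par (app a b) Q) (hna : ¬ IsAbs a) :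
    ∃ a' b', Q = app a' b' ∧ Par a a' ∧ Par b b' := by
  cases h with
  | app h1 h2 => exact ⟨_, _, rfl, h1, h2⟩
  | beta ht hu => exact absurd trivial hna

theorem par_appList_inv {y : ℕ} {args : List Lam} {Q : Lam}
    (h : Par (appList (var y) args) Q) :
    ∃ args', Q = appList (var y) args' ∧ List.Forall₂ Par args args' := by
  induction args using List.reverseRecOn generalizing Q with
  | nil =>
    rw [par_var_inv h]
    exact ⟨[], rfl, List.Forall₂.nil⟩
  | append_singleton l a ih =>
    simp only [appList, List.foldl_append, List.foldl_cons, List.foldl_nil] at h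
    obtain ⟨a', b', rfl, h1, h2⟩ :=
      par_app_inv h (spine_not_abs (spine_appList (y := y) l))
    obtain ⟨l', rfl, hf⟩ := ih h1
    refine ⟨l' ++ [b'], ?_, List.rel_append hf (List.Forall₂.cons h2 List.Forall₂.nil)⟩
    simp [appList, List.foldl_append]

theorem par_mkHnf_inv {n y : ℕ} {args : List Lam} {Q : Lam}
    (h : Par (mkHnf n y args) Q) :
    ∃ args', Q = mkHnf n y args' ∧ List.Forall₂ Par args args' := by
  obtain ⟨t', rfl, ht⟩ := par_absN_inv h
  obtain ⟨args', rfl, hf⟩ := par_appList_inv ht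
  exact ⟨args', rfl, hf⟩

theorem par_headSteps {k : ℕ} : ∀ {P Q : Lam} {n y : ℕ} {args : List Lam},
    Par P Q → HeadSteps k P (mkHnf n y args) →
    ∃ k' args', k' ≤ k ∧ HeadSteps k' Q (mkHnf n y args') ∧ List.Forall₂ Par args args' := by
  induction k with
  | zero =>
    intro P Q n y args hpar hsteps
    cases hsteps
    obtain ⟨args', rfl, hf⟩ := par_mkHnf_inv hpar
    exact ⟨0, args', le_refl _, rfl, hf⟩
  | succ k ih =>
    intro P Q n y args hpar hsteps
    obtain ⟨u, hu, hrest⟩ := hsteps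
    rcases par_headStep_commute hu hpar with h1 | ⟨Q', hQ, hparu, _⟩
    · obtain ⟨k', args', hle, h2, h3⟩ := ih h1 hrest
      exact ⟨k', args', by omega, h2, h3⟩
    · obtain ⟨k', args', hle, h2, h3⟩ := ih hparu hrest
      exact ⟨k' + 1, args', by omega, ⟨Q', hQ, h2⟩, h3⟩

theorem forall₂_betaStar_trans {a b c : List Lam} (h1 : List.Forall₂ BetaStar a b)
    (h2 : List.Forall₂ BetaStar b c) : List.Forall₂ BetaStar a c := by
  induction h1 generalizing c with
  | nil => cases h2; exact List.Forall₂.nil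
  | cons h _ ih =>
    cases h2 with
    | cons h' hf' => exact List.Forall₂.cons (h.trans h') (ih hf')

theorem forall₂_betaStar_refl (l : List Lam) : List.Forall₂ BetaStar l l := by
  induction l with
  | nil => exact List.Forall₂.nil
  | cons a l ih => exact List.Forall₂.cons Relation.ReflTransGen.refl ih

theorem betaStar_headSteps {P Q : Lam} (h : BetaStar P Q) :
    ∀ {k n y : ℕ} {args : List Lam}, HeadSteps k P (mkHnf n y args) →
    ∃ k' args', k' ≤ k ∧ HeadSteps k' Q (mkHnf n y args') ∧
      List.Forall₂ BetaStar args args' := by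
  induction h using Relation.ReflTransGen.head_induction_on with
  | refl =>
    intro k n y args hsteps
    exact ⟨k, args, le_refl _, hsteps, forall₂_betaStar_refl args⟩
  | @head P P₂ hbeta _ ih =>
    intro k n y args hsteps
    obtain ⟨k₁, args₁, hle₁, h1, hf₁⟩ := par_headSteps (beta_par hbeta) hsteps
    obtain ⟨k₂, args₂, hle₂, h2, hf₂⟩ := ih h1
    refine ⟨k₂, args₂, by omega, h2, ?_⟩
    exact forall₂_betaStar_trans (List.Forall₂.imp (fun _ _ h => par_betaStar h) hf₁) hf₂

theorem betaStar_hasHnf_fwd {P Q : Lam} (h : BetaStar P Q) (hp : HasHnf P) : HasHnf Q := by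
  obtain ⟨k, H, hk, n, y, args, rfl⟩ := hp
  obtain ⟨k', args', _, h2, _⟩ := betaStar_headSteps h hk
  exact ⟨k', _, h2, n, y, args', rfl⟩

theorem betaStar_headSteps_back {P Q : Lam} (h : BetaStar P Q) {k' n y : ℕ}
    {args' : List Lam} (hq : HeadSteps k' Q (mkHnf n y args')) :
    ∃ k args, HeadSteps k P (mkHnf n y args) ∧ List.Forall₂ BetaStar args args' := by
  have hQ : HasHnf Q := ⟨k', _, hq, n, y, args', rfl⟩
  obtain ⟨k0, H0, hs0, n0, y0, args0, rfl⟩ := betaStar_hasHnf_back h hQ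
  obtain ⟨k2, args2, _, h2, hf2⟩ := betaStar_headSteps h hs0
  obtain ⟨hkeq, hHeq⟩ := headSteps_hnf_unique h2 hq
    (hnfP_iff_isHnf.2 ⟨n0, y0, args2, rfl⟩) (hnfP_iff_isHnf.2 ⟨n, y, args', rfl⟩)
  obtain ⟨hn, hy, hargs⟩ := mkHnf_inj hHeq
  subst hn; subst hy; subst hargs
  exact ⟨k0, args0, hs0, hf2⟩

/-! ### Transfer of clocked Böhm trees along reduction -/

/-- Annotation relation: equal `none`s, or decreasing clocks. -/
def AnnRel (a a' : Option ℕ) : Prop :=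
  (a = none ∧ a' = none) ∨ ∃ k k', a = some k ∧ a' = some k' ∧ k' ≤ k

theorem betaStar_cbt {P : Lam} {p : List ℕ} {o : BTN} {a : Option ℕ} (h : CBT P p o a) :
    ∀ {Q : Lam}, BetaStar P Q → ∃ a', CBT Q p o a' ∧ AnnRel a a' := by
  induction h with
  | @bot M hnh =>
    intro Q hQ
    exact ⟨none, CBT.bot (fun hh => hnh (betaStar_hasHnf_back hQ hh)), Or.inl ⟨rfl, rfl⟩⟩
  | @lam M k n y args i hsteps hi =>
    intro Q hQ
    obtain ⟨k', args', hle, h2, _⟩ := betaStar_headSteps hQ hsteps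
    refine ⟨_, CBT.lam h2 hi, ?_⟩
    by_cases h0 : i = 0
    · simp only [h0, if_pos rfl]; exact Or.inr ⟨k, k', rfl, rfl, hle⟩
    · simp only [if_neg h0]; exact Or.inl ⟨rfl, rfl⟩
  | @app M k n y args j hsteps hj =>
    intro Q hQ
    obtain ⟨k', args', hle, h2, hf⟩ := betaStar_headSteps hQ hsteps
    have hlen := List.Forall₂.length_eq hf
    refine ⟨_, CBT.app h2 (hlen ▸ hj), ?_⟩
    by_cases h0 : n = 0 ∧ j = 0
    · simp only [if_pos h0]; exact Or.inr ⟨k, k', rfl, rfl, hle⟩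
    · simp only [if_neg h0]; exact Or.inl ⟨rfl, rfl⟩
  | @var M k n y args hsteps =>
    intro Q hQ
    obtain ⟨k', args', hle, h2, hf⟩ := betaStar_headSteps hQ hsteps
    have hlen := List.Forall₂.length_eq hf
    refine ⟨if n = 0 ∧ args.length = 0 then some k' else none, ?_, ?_⟩
    · rw [hlen]; exact CBT.var h2
    · by_cases h0 : n = 0 ∧ args.length = 0
      · rw [if_pos h0, if_pos h0]; exact Or.inr ⟨k, k', rfl, rfl, hle⟩
      · rw [if_neg h0, if_neg h0]; exact Or.inl ⟨rfl, rfl⟩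
  | @child M k n y args i q o a hsteps hilt hc ih =>
    intro Q hQ
    obtain ⟨k', args', hle, h2, hf⟩ := betaStar_headSteps hQ hsteps
    have hlen := List.Forall₂.length_eq hf
    have hilt' : i < args'.length := hlen ▸ hilt
    have hbs : BetaStar (args.get ⟨i, hilt⟩) (args'.get ⟨i, hilt'⟩) :=
      List.Forall₂.get hf hilt hilt'
    obtain ⟨a', hc', hrel⟩ := ih hbs
    refine ⟨a', ?_, hrel⟩
    have := CBT.child h2 hilt' hc'
    rwa [← hlen] at this

/-! ### Backward transfer and uniqueness of CBT nodes -/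

theorem betaStar_cbt_back {Q : Lam} {p : List ℕ} {o : BTN} {a : Option ℕ}
    (h : CBT Q p o a) :
    ∀ {P : Lam}, BetaStar P Q → ∃ a', CBT P p o a' := by
  induction h with
  | @bot M hnh =>
    intro P hP
    exact ⟨none, CBT.bot (fun hh => hnh (betaStar_hasHnf_fwd hP hh))⟩
  | @lam M k n y args i hsteps hi =>
    intro P hP
    obtain ⟨k0, args0, h2, _⟩ := betaStar_headSteps_back hP hsteps
    exact ⟨_, CBT.lam h2 hi⟩
  | @app M k n y args j hsteps hj =>
    intro P hP
    obtain ⟨k0, args0, h2, hf⟩ := betaStar_headSteps_back hP hsteps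
    have hlen := List.Forall₂.length_eq hf
    exact ⟨_, CBT.app h2 (hlen ▸ hj)⟩
  | @var M k n y args hsteps =>
    intro P hP
    obtain ⟨k0, args0, h2, hf⟩ := betaStar_headSteps_back hP hsteps
    have hlen := List.Forall₂.length_eq hf
    exact ⟨_, by rw [← hlen]; exact CBT.var h2⟩
  | @child M k n y args i q o a hsteps hilt hc ih =>
    intro P hP
    obtain ⟨k0, args0, h2, hf⟩ := betaStar_headSteps_back hP hsteps
    have hlen := List.Forall₂.length_eq hf
    have hilt0 : i < args0.length := hlen ▸ hilt
    obtain ⟨a', hc'⟩ := ih (List.Forall₂.get hf hilt0 hilt)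
    refine ⟨a', ?_⟩
    have := CBT.child h2 hilt0 hc'
    rwa [hlen] at this

theorem hasHnf_of_headSteps {M : Lam} {k n y : ℕ} {args : List Lam}
    (h : HeadSteps k M (mkHnf n y args)) : HasHnf M :=
  ⟨k, _, h, n, y, args, rfl⟩

theorem head_data_unique {M : Lam} {k k' n n' y y' : ℕ} {args args' : List Lam}
    (h1 : HeadSteps k M (mkHnf n y args)) (h2 : HeadSteps k' M (mkHnf n' y' args')) :
    k = k' ∧ n = n' ∧ y = y' ∧ args = args' := by
  obtain ⟨hk, hH⟩ := headSteps_hnf_unique h1 h2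
    (hnfP_iff_isHnf.2 ⟨n, y, args, rfl⟩) (hnfP_iff_isHnf.2 ⟨n', y', args', rfl⟩)
  obtain ⟨hn, hy, hargs⟩ := mkHnf_inj hH
  exact ⟨hk, hn, hy, hargs⟩

theorem two_not_mem_rep {n j : ℕ} : (2 : ℕ) ∉ List.replicate n 0 ++ List.replicate j 1 := by
  simp [List.mem_append, List.mem_replicate]

theorem rep1_two_inj {a b : ℕ} {q q' : List ℕ}
    (h : List.replicate a 1 ++ 2 :: q = List.replicate b 1 ++ 2 :: q') :
    a = b ∧ q = q' := by
  induction a generalizing b with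
  | zero =>
    cases b with
    | zero => simp at h; exact ⟨rfl, h⟩
    | succ b => simp [List.replicate_succ] at h
  | succ a ih =>
    cases b with
    | zero => simp [List.replicate_succ] at h
    | succ b =>
      simp only [List.replicate_succ, List.cons_append, List.cons.injEq] at h
      obtain ⟨ha, hq⟩ := ih h.2
      exact ⟨by omega, hq⟩

theorem cbt_unique {M : Lam} {p : List ℕ} {o : BTN} {a : Option ℕ} (h1 : CBT M p o a) :
    ∀ {p' : List ℕ} {o' : BTN} {a' : Option ℕ}, CBT M p' o' a' → p = p' →
      o = o' ∧ a = a' := by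
  induction h1 with
  | @bot M hnh =>
    intro p' o' a' h2 hp
    cases h2 with
    | bot _ => exact ⟨rfl, rfl⟩
    | lam hs _ => exact absurd (hasHnf_of_headSteps hs) hnh
    | app hs _ => exact absurd (hasHnf_of_headSteps hs) hnh
    | var hs => exact absurd (hasHnf_of_headSteps hs) hnh
    | child hs _ _ => exact absurd (hasHnf_of_headSteps hs) hnh
  | @lam M k n y args i hs hi =>
    intro p' o' a' h2 hp
    cases h2 with
    | bot hnh => exact absurd (hasHnf_of_headSteps hs) hnh
    | @lam _ k2 n2 y2 args2 i2 hs2 hi2 =>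
      obtain ⟨rfl, rfl, rfl, rfl⟩ := head_data_unique hs hs2
      have hii : i = i2 := by have := congrArg List.length hp; simpa using this
      subst hii
      exact ⟨rfl, rfl⟩
    | @app _ k2 n2 y2 args2 j2 hs2 hj2 =>
      obtain ⟨rfl, rfl, rfl, rfl⟩ := head_data_unique hs hs2
      exfalso; have := congrArg List.length hp; simp at this; omega
    | @var _ k2 n2 y2 args2 hs2 =>
      obtain ⟨rfl, rfl, rfl, rfl⟩ := head_data_unique hs hs2
      exfalso; have := congrArg List.length hp; simp at this; omega
    | @child _ k2 n2 y2 args2 i2 q2 o2 a2 hs2 hi2 hc2 =>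
      obtain ⟨rfl, rfl, rfl, rfl⟩ := head_data_unique hs hs2
      exfalso
      have h2m : (2 : ℕ) ∈ List.replicate i 0 := by rw [hp]; simp
      simp [List.mem_replicate] at h2m
  | @app M k n y args j hs hj =>
    intro p' o' a' h2 hp
    cases h2 with
    | bot hnh => exact absurd (hasHnf_of_headSteps hs) hnh
    | @lam _ k2 n2 y2 args2 i2 hs2 hi2 =>
      obtain ⟨rfl, rfl, rfl, rfl⟩ := head_data_unique hs hs2
      exfalso; have := congrArg List.length hp; simp at this; omega
    | @app _ k2 n2 y2 args2 j2 hs2 hj2 =>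
      obtain ⟨rfl, rfl, rfl, rfl⟩ := head_data_unique hs hs2
      have hjj : j = j2 := by have := congrArg List.length hp; simp at this; omega
      subst hjj
      exact ⟨rfl, rfl⟩
    | @var _ k2 n2 y2 args2 hs2 =>
      obtain ⟨rfl, rfl, rfl, rfl⟩ := head_data_unique hs hs2
      exfalso; have := congrArg List.length hp; simp at this; omega
    | @child _ k2 n2 y2 args2 i2 q2 o2 a2 hs2 hi2 hc2 =>
      obtain ⟨rfl, rfl, rfl, rfl⟩ := head_data_unique hs hs2
      exact absurd (hp ▸ two_not_mem_rep) (by simp)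
  | @var M k n y args hs =>
    intro p' o' a' h2 hp
    cases h2 with
    | bot hnh => exact absurd (hasHnf_of_headSteps hs) hnh
    | @lam _ k2 n2 y2 args2 i2 hs2 hi2 =>
      obtain ⟨rfl, rfl, rfl, rfl⟩ := head_data_unique hs hs2
      exfalso; have := congrArg List.length hp; simp at this; omega
    | @app _ k2 n2 y2 args2 j2 hs2 hj2 =>
      obtain ⟨rfl, rfl, rfl, rfl⟩ := head_data_unique hs hs2
      exfalso; have := congrArg List.length hp; simp at this; omega
    | @var _ k2 n2 y2 args2 hs2 =>
      obtain ⟨rfl, rfl, rfl, rfl⟩ := head_data_unique hs hs2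
      exact ⟨rfl, rfl⟩
    | @child _ k2 n2 y2 args2 i2 q2 o2 a2 hs2 hi2 hc2 =>
      obtain ⟨rfl, rfl, rfl, rfl⟩ := head_data_unique hs hs2
      exact absurd (hp ▸ two_not_mem_rep) (by simp)
  | @child M k n y args i q o a hs hilt hc ih =>
    intro p' o' a' h2 hp
    cases h2 with
    | bot hnh => exact absurd (hasHnf_of_headSteps hs) hnh
    | @lam _ k2 n2 y2 args2 i2 hs2 hi2 =>
      obtain ⟨rfl, rfl, rfl, rfl⟩ := head_data_unique hs hs2
      exfalso
      have h2m : (2 : ℕ) ∈ List.replicate i2 0 := by rw [← hp]; simp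
      simp [List.mem_replicate] at h2m
    | @app _ k2 n2 y2 args2 j2 hs2 hj2 =>
      obtain ⟨rfl, rfl, rfl, rfl⟩ := head_data_unique hs hs2
      exact absurd (hp ▸ (by simp : (2:ℕ) ∈ List.replicate n 0 ++
        List.replicate (args.length - 1 - i) 1 ++ 2 :: q)) two_not_mem_rep
    | @var _ k2 n2 y2 args2 hs2 =>
      obtain ⟨rfl, rfl, rfl, rfl⟩ := head_data_unique hs hs2
      exact absurd (hp ▸ (by simp : (2:ℕ) ∈ List.replicate n 0 ++
        List.replicate (args.length - 1 - i) 1 ++ 2 :: q)) two_not_mem_rep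
    | @child _ k2 n2 y2 args2 i2 q2 o2 a2 hs2 hi2 hc2 =>
      obtain ⟨rfl, rfl, rfl, rfl⟩ := head_data_unique hs hs2
      rw [List.append_assoc, List.append_assoc] at hp
      have hp2 := List.append_cancel_left hp
      obtain ⟨hi12, hq⟩ := rep1_two_inj hp2
      have hii : i = i2 := by omega
      subst hii
      exact ih hc2 hq

theorem cbtle_of_betaStar {N L : Lam} (hNL : BetaStar N L) : CBTle L N := by
  constructor
  · intro p o
    constructor
    · rintro ⟨a, hc⟩
      exact betaStar_cbt_back hc hNL
    · rintro ⟨a, hc⟩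
      obtain ⟨a', hc', _⟩ := betaStar_cbt hc hNL
      exact ⟨a', hc'⟩
  · intro p o₁ o₂ k₁ k₂ _ h1 h2
    obtain ⟨a', hc', hrel⟩ := betaStar_cbt h2 hNL
    rcases hrel with ⟨hne, _⟩ | ⟨kk, kk', hkk, hkk', hle⟩
    · exact absurd hne (by simp)
    · obtain ⟨-, ha⟩ := cbt_unique h1 hc' rfl
      rw [hkk'] at ha
      injection hkk with hkk
      injection ha with ha
      omega

/-- if no reduct `M'` of `M` satisfies `cBT M' ≤ cBT N`, then `M ≠β N`. -/
theorem discrimination_general (M N : Lam)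
    (h : ¬ ∃ M', BetaStar M M' ∧ CBTle M' N) : ¬ Conv M N := by
  intro hconv
  obtain ⟨L, hML, hNL⟩ := conv_common_reduct hconv
  exact h ⟨L, hML, cbtle_of_betaStar hNL⟩

end Lam
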